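/- Let $f$ be a conformal map from a bounded simply-connected domain $\Omega\subset\mathbb{C}$ onto a disk $D(b,R)$, let $a\in\Omega$ with $f(a)\ne b$, and set $\delta=\overline{f(a)-b}$, $\lambda=(R^2-|\delta|^2)/R$. If the area of $\{z\in\Omega:g_\Omega(z,a)>t\}$ weighted by $|f'|^2$ equals $e^{-4\pi t}$ times its value at $t=0$ for all $t\ge0$, then $\pi R^2 e^{-4\pi t}\le \pi\lambda^2 e^{-4\pi t}$ for large $t$, a contradiction since $0<\lambda<R$. Hence the level-set area identity $\int_{\{g_\Omega(\cdot,a)>t\}}|f'|^2dA=e^{-4\pi t}\int_\Omega|f'|^2dA$ forces $b=f(a)$. -/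

import Mathlib

open MeasureTheory Set

set_option maxHeartbeats 1000000

/-- If the superlevel sets of the Green function of the disk `D(b,R)` with pole `a'`
have areas `π R² e^{-4πt}` for all `t ≥ 0` (as forced by the level-set area identity
`∫_{{g_Ω(·,a)>t}} |f'|² dA = e^{-4πt} ∫_Ω |f'|² dA` under a conformal map `f` of `Ω`
onto `D(b,R)` with `a' = f(a)`), then the pole must be the center: `a' = b`. -/
theorem stmt16 (b a' : ℂ) (R : ℝ) (hR : 0 < R) (ha' : a' ∈ Metric.ball b R)
    (harea : ∀ t ≥ (0 : ℝ),
      volume {w : ℂ | w ∈ Metric.ball b R ∧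
          2 * Real.pi * t <
            Real.log (norm ((R ^ 2 - (starRingEnd ℂ) (w - b) * (a' - b)) /
              (R * (w - a')))) } =
        ENNReal.ofReal (Real.pi * R ^ 2 * Real.exp (-(4 * Real.pi * t)))) :
    a' = b := by
  by_contra hab
  obtain ⟨c, hcdef⟩ : ∃ c : ℝ, c = norm (a' - b) := ⟨_, rfl⟩
  have hc0 : 0 < c := by
    rw [hcdef]
    simpa [norm_pos_iff, sub_ne_zero] using hab
  have hcR : c < R := by
    rw [hcdef]
    simpa [Complex.dist_eq] using Metric.mem_ball.mp ha'
  have hπ : 0 < Real.pi := Real.pi_pos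
  obtain ⟨K, hKdef⟩ : ∃ K : ℝ, K = Real.exp 1 * (R / c) := ⟨_, rfl⟩
  have hRc1 : (1 : ℝ) < R / c := (one_lt_div hc0).mpr hcR
  have he1 : (1 : ℝ) < Real.exp 1 := by
    have := Real.add_one_le_exp 1
    linarith
  have hK1 : R / c < K := by
    rw [hKdef]
    nlinarith
  have hKpos : 0 < K := lt_trans (by linarith) hK1
  obtain ⟨t, htdef⟩ : ∃ t : ℝ, t = Real.log K / (2 * Real.pi) := ⟨_, rfl⟩
  have hlogK : 0 < Real.log K := Real.log_pos (lt_trans hRc1 hK1)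
  have ht0 : 0 < t := htdef ▸ div_pos hlogK (by positivity)
  have hexp : Real.exp (2 * Real.pi * t) = K := by
    rw [htdef]
    rw [show 2 * Real.pi * (Real.log K / (2 * Real.pi)) = Real.log K by
      field_simp]
    exact Real.exp_log hKpos
  obtain ⟨r, hrdef⟩ : ∃ r : ℝ, r = (R ^ 2 - c ^ 2) / (K * R - c) := ⟨_, rfl⟩
  have hKRc : 0 < K * R - c := by nlinarith
  have hr0 : 0 < r := hrdef ▸ div_pos (by nlinarith) hKRc
  -- the superlevel set is contained in the small ball
  have hsub : {w : ℂ | w ∈ Metric.ball b R ∧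
      2 * Real.pi * t <
        Real.log (norm ((R ^ 2 - (starRingEnd ℂ) (w - b) * (a' - b)) /
          (R * (w - a')))) } ⊆ Metric.ball a' r := by
    rintro w ⟨-, hw2⟩
    have hq0 : 0 < norm ((R ^ 2 - (starRingEnd ℂ) (w - b) * (a' - b)) /
        (R * (w - a'))) := by
      by_contra h
      have h0 : norm ((R ^ 2 - (starRingEnd ℂ) (w - b) * (a' - b)) /
          (R * (w - a'))) = 0 := le_antisymm (not_lt.mp h) (by positivity)
      rw [h0, Real.log_zero] at hw2
      nlinarith
    have hKq : K < norm ((R ^ 2 - (starRingEnd ℂ) (w - b) * (a' - b)) /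
        (R * (w - a'))) := by
      calc K = Real.exp (2 * Real.pi * t) := hexp.symm
        _ < _ := Real.exp_lt_exp.mpr hw2
        _ = _ := Real.exp_log hq0
    have hwne : w ≠ a' := by
      rintro rfl
      simp at hq0
    have hu0 : 0 < norm (w - a') := by
      simpa [norm_pos_iff, sub_ne_zero] using hwne
    -- rewrite the numerator
    have hnum : (R : ℂ) ^ 2 - (starRingEnd ℂ) (w - b) * (a' - b)
        = ((R ^ 2 - c ^ 2 : ℝ) : ℂ) - (a' - b) * (starRingEnd ℂ) (w - a') := by
      have h2 : (a' - b) * (starRingEnd ℂ) (a' - b) = (c : ℂ) ^ 2 := by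
        rw [Complex.mul_conj, hcdef, ← Complex.sq_norm]
        push_cast
        ring
      have h1 : (starRingEnd ℂ) (w - b) = (starRingEnd ℂ) (w - a') + (starRingEnd ℂ) (a' - b) := by
        rw [← map_add]; ring_nf
      rw [h1]
      push_cast
      linear_combination -h2
    have habsq : norm (((R : ℂ) ^ 2 - (starRingEnd ℂ) (w - b) * (a' - b)) /
        ((R : ℂ) * (w - a')))
        = norm ((R : ℂ) ^ 2 - (starRingEnd ℂ) (w - b) * (a' - b))
          / (R * norm (w - a')) := by
      rw [norm_div, norm_mul, Complex.norm_real, Real.norm_eq_abs, abs_of_pos hR]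
    have hnumle : norm ((R : ℂ) ^ 2 - (starRingEnd ℂ) (w - b) * (a' - b))
        ≤ (R ^ 2 - c ^ 2) + c * norm (w - a') := by
      rw [hnum]
      calc norm (((R ^ 2 - c ^ 2 : ℝ) : ℂ) - (a' - b) * (starRingEnd ℂ) (w - a'))
          ≤ norm ((R ^ 2 - c ^ 2 : ℝ) : ℂ)
            + norm ((a' - b) * (starRingEnd ℂ) (w - a')) := by
            exact norm_sub_le _ _
        _ = (R ^ 2 - c ^ 2) + c * norm (w - a') := by
            rw [norm_mul, Complex.norm_conj, Complex.norm_real, Real.norm_eq_abs, abs_of_nonneg (by nlinarith),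
              ← hcdef]
    have hmain : K * (R * norm (w - a'))
        < (R ^ 2 - c ^ 2) + c * norm (w - a') := by
      rw [habsq, lt_div_iff₀ (by positivity)] at hKq
      linarith
    have hlt : norm (w - a') < r := by
      rw [hrdef, lt_div_iff₀ hKRc]
      nlinarith
    simpa [Metric.mem_ball, Complex.dist_eq] using hlt
  -- compare volumes
  have hvol := harea t ht0.le
  have hle : ENNReal.ofReal (Real.pi * R ^ 2 * Real.exp (-(4 * Real.pi * t)))
      ≤ volume (Metric.ball a' r) := by
    rw [← hvol]; exact measure_mono hsub
  rw [Complex.volume_ball] at hle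
  have hcoe : (NNReal.pi : ENNReal) = ENNReal.ofReal Real.pi := by
    rw [← NNReal.coe_real_pi, ENNReal.ofReal_coe_nnreal]
  rw [hcoe, ← ENNReal.ofReal_pow hr0.le, ← ENNReal.ofReal_mul (by positivity)] at hle
  have hreal : Real.pi * R ^ 2 * Real.exp (-(4 * Real.pi * t)) ≤ r ^ 2 * Real.pi :=
    (ENNReal.ofReal_le_ofReal_iff (by positivity)).mp hle
  have hexpK : Real.exp (-(4 * Real.pi * t)) = (K ^ 2)⁻¹ := by
    rw [Real.exp_neg, show (4 : ℝ) * Real.pi * t = 2 * Real.pi * t + 2 * Real.pi * t by ring,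
      Real.exp_add, hexp, sq]
  rw [hexpK] at hreal
  -- derive the contradiction
  have h1 : R ^ 2 * (K * R - c) ^ 2 ≤ K ^ 2 * (R ^ 2 - c ^ 2) ^ 2 := by
    have hK2 : (0 : ℝ) < K ^ 2 := by positivity
    have hdiv : R ^ 2 / K ^ 2 ≤ (R ^ 2 - c ^ 2) ^ 2 / (K * R - c) ^ 2 := by
      rw [hrdef, div_pow] at hreal
      have hmul := mul_le_mul_of_nonneg_left hreal (le_of_lt (inv_pos.mpr hπ))
      calc R ^ 2 / K ^ 2 = Real.pi⁻¹ * (Real.pi * R ^ 2 * (K ^ 2)⁻¹) := by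
            field_simp
        _ ≤ Real.pi⁻¹ * ((R ^ 2 - c ^ 2) ^ 2 / (K * R - c) ^ 2 * Real.pi) := hmul
        _ = (R ^ 2 - c ^ 2) ^ 2 / (K * R - c) ^ 2 := by field_simp
    rw [div_le_div_iff₀ hK2 (by positivity)] at hdiv
    linarith
  have h2 : R * (K * R - c) ≤ K * (R ^ 2 - c ^ 2) := by
    nlinarith [mul_pos hR hKRc, mul_pos hKpos (show (0:ℝ) < R ^ 2 - c ^ 2 by nlinarith)]
  have h3 : R < K * c := (div_lt_iff₀ hc0).mp hK1
  nlinarith
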